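/- Iterative computation of generalized degree: let (N,A) be a network on n ≥ 1 nodes with maximal degree 𝔡 = max{d_i : i ∈ N}, let C = 𝔡·I − L, and for ε > 0 let β = ε/(1 + ε𝔡). Define the sequence of vectors x(ε)^(0) = (1 − β𝔡)·d and x(ε)^(k) = x(ε)^(k−1) + (1 − β𝔡)·(βC)^k·d for k = 1, 2, …. Then lim_{k → ∞} x(ε)^(k) = x(ε) (componentwise). -/

import Mathlib

open Matrix Filter
open scoped NNReal

/-- A network on `n` nodes: a symmetric, loopless 0-1 adjacency matrix. -/
def IsNetwork {n : ℕ} (A : Matrix (Fin n) (Fin n) ℝ) : Prop :=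
  (∀ i j, A i j = A j i) ∧ (∀ i, A i i = 0) ∧ (∀ i j, A i j = 0 ∨ A i j = 1)

/-- Degree of node `i`: the `i`-th entry of `A · e`. -/
def deg {n : ℕ} (A : Matrix (Fin n) (Fin n) ℝ) (i : Fin n) : ℝ :=
  ∑ j, A i j

/-- The Laplacian matrix of the network: `ℓ_{ii} = d_i`, `ℓ_{ij} = -a_{ij}` for `i ≠ j`. -/
def lap {n : ℕ} (A : Matrix (Fin n) (Fin n) ℝ) : Matrix (Fin n) (Fin n) ℝ :=
  Matrix.diagonal (deg A) - A

/-- Iterative computation of generalized degree: the sequence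
`x⁽⁰⁾ = (1 − β𝔡)·d`, `x⁽ᵏ⁾ = x⁽ᵏ⁻¹⁾ + (1 − β𝔡)·(βC)^k·d` converges (componentwise)
to the generalized degree `x(ε)`. -/
theorem generalizedDegree_iterative
    {n : ℕ} (hn : 0 < n) (A : Matrix (Fin n) (Fin n) ℝ) (hA : IsNetwork A)
    (ε : ℝ) (hε : 0 < ε) (x : Fin n → ℝ)
    (hx : ((1 : Matrix (Fin n) (Fin n) ℝ) + ε • lap A).mulVec x = deg A)
    (D β : ℝ) (hD : D = ⨆ i, deg A i) (hβ : β = ε / (1 + ε * D))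
    (C : Matrix (Fin n) (Fin n) ℝ)
    (hC : C = D • (1 : Matrix (Fin n) (Fin n) ℝ) - lap A)
    (X : ℕ → Fin n → ℝ)
    (hX0 : X 0 = (1 - β * D) • deg A)
    (hXk : ∀ k : ℕ, X (k + 1) =
      X k + (1 - β * D) • ((β • C) ^ (k + 1)).mulVec (deg A)) :
    Filter.Tendsto X Filter.atTop (nhds x) := by
  classical
  haveI : Nonempty (Fin n) := ⟨⟨0, hn⟩⟩
  letI : NormedRing (Matrix (Fin n) (Fin n) ℝ) := Matrix.linftyOpNormedRing
  letI : NormedSpace ℝ (Matrix (Fin n) (Fin n) ℝ) := Matrix.linftyOpNormedSpace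
  letI : CompleteSpace (Matrix (Fin n) (Fin n) ℝ) :=
    inferInstance
  -- basic facts
  have hAnn : ∀ i j, 0 ≤ A i j := by
    intro i j; rcases hA.2.2 i j with h | h <;> simp [h]
  have hdnn : ∀ i, 0 ≤ deg A i := fun i => Finset.sum_nonneg fun j _ => hAnn i j
  have hdle : ∀ i, deg A i ≤ D := by
    intro i; rw [hD]
    exact le_ciSup (Set.Finite.bddAbove (Set.finite_range _)) i
  have hD0 : 0 ≤ D := le_trans (hdnn ⟨0, hn⟩) (hdle ⟨0, hn⟩)
  have hden : (0:ℝ) < 1 + ε * D := by positivity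
  have hβ0 : 0 ≤ β := by rw [hβ]; positivity
  have hβε : β * (1 + ε * D) = ε := by rw [hβ]; field_simp
  have hβD : β * D < 1 := by
    rw [hβ, div_mul_eq_mul_div, div_lt_one hden]; nlinarith
  -- entries of C
  have hCentry : ∀ i j, C i j = if i = j then D - deg A i else A i j := by
    intro i j
    by_cases h : i = j
    · subst h
      simp [hC, lap, Matrix.sub_apply, Matrix.smul_apply, Matrix.one_apply,
        hA.2.1 i]
    · simp [hC, lap, Matrix.sub_apply, Matrix.smul_apply, Matrix.one_apply, h]
  have hCnn : ∀ i j, 0 ≤ C i j := by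
    intro i j; rw [hCentry]
    split
    · linarith [hdle i]
    · exact hAnn i j
  have hCrow : ∀ i, ∑ j, C i j = D := by
    intro i
    have h1 : C i i + ∑ j ∈ Finset.univ.erase i, C i j = ∑ j, C i j :=
      Finset.add_sum_erase _ _ (Finset.mem_univ i)
    have h2 : A i i + ∑ j ∈ Finset.univ.erase i, A i j = deg A i :=
      Finset.add_sum_erase _ _ (Finset.mem_univ i)
    have h3 : ∑ j ∈ Finset.univ.erase i, C i j = ∑ j ∈ Finset.univ.erase i, A i j :=
      Finset.sum_congr rfl fun j hj => by
        rw [hCentry, if_neg (Ne.symm (Finset.ne_of_mem_erase hj))]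
    have h4 : C i i = D - deg A i := by rw [hCentry]; simp
    have h5 : A i i = 0 := hA.2.1 i
    rw [← h1, h3, h4]
    rw [h5, zero_add] at h2
    rw [h2]; ring
  -- norm of C
  have hnormC : ‖C‖ ≤ D := by
    rw [Matrix.linfty_opNorm_def]
    rw [show D = ((D.toNNReal : ℝ≥0) : ℝ) from (Real.coe_toNNReal D hD0).symm,
      NNReal.coe_le_coe]
    refine Finset.sup_le fun i _ => ?_
    rw [← NNReal.coe_le_coe]
    push_cast
    rw [Real.coe_toNNReal D hD0, ← hCrow i]
    refine le_of_eq (Finset.sum_congr rfl fun j _ => ?_)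
    exact Real.norm_of_nonneg (hCnn i j)
  have hnorm : ‖β • C‖ < 1 := by
    rw [norm_smul, Real.norm_eq_abs, abs_of_nonneg hβ0]
    calc β * ‖C‖ ≤ β * D := by nlinarith [norm_nonneg C]
    _ < 1 := hβD
  -- geometric series
  have hsum : Summable fun k : ℕ => (β • C) ^ k :=
    summable_geometric_of_norm_lt_one hnorm
  set T : Matrix (Fin n) (Fin n) ℝ := ∑' k : ℕ, (β • C) ^ k with hT
  have hTmul : T * (1 - β • C) = 1 := geom_series_mul_neg _ hnorm
  -- closed form for X
  have hclosed : ∀ k, X k =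
      (1 - β * D) • ((∑ i ∈ Finset.range (k + 1), (β • C) ^ i).mulVec (deg A)) := by
    intro k
    induction k with
    | zero => simpa using hX0
    | succ k ih =>
      rw [hXk k, ih, ← smul_add, ← Matrix.add_mulVec, ← Finset.sum_range_succ]
  -- key identity: (1 - β•C) *ᵥ x = (1 - β*D) • deg A
  have hkey : (1 - β • C).mulVec x = (1 - β * D) • deg A := by
    have hmat : ((1 + ε * D) : ℝ) • ((1 : Matrix (Fin n) (Fin n) ℝ) - β • C)
        = 1 + ε • lap A := by
      rw [hC]
      ext i j
      simp only [Matrix.smul_apply, Matrix.sub_apply, Matrix.add_apply,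
        Matrix.smul_apply, Matrix.one_apply, smul_eq_mul]
      split
      · linear_combination (lap A i j - D) * hβε
      · linear_combination lap A i j * hβε
    have := congrArg (fun M : Matrix (Fin n) (Fin n) ℝ => M.mulVec x) hmat
    simp only [Matrix.smul_mulVec] at this
    rw [hx] at this
    have h1 : (1 - β * D) * (1 + ε * D) = 1 := by nlinarith
    calc (1 - β • C).mulVec x
        = ((1 - β * D) * (1 + ε * D)) • (1 - β • C).mulVec x := by rw [h1, one_smul]
      _ = (1 - β * D) • ((1 + ε * D) • (1 - β • C).mulVec x) := by rw [mul_smul]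
      _ = (1 - β * D) • deg A := by rw [this]
  -- limit identity: x = (1 - β*D) • T *ᵥ deg A
  have hxeq : x = (1 - β * D) • T.mulVec (deg A) := by
    have : T.mulVec ((1 - β • C).mulVec x) = x := by
      rw [Matrix.mulVec_mulVec, hTmul, Matrix.one_mulVec]
    rw [← this, hkey, Matrix.mulVec_smul]
  -- convergence
  have hSt : Tendsto (fun k => ∑ i ∈ Finset.range (k + 1), (β • C) ^ i)
      atTop (nhds T) :=
    (hsum.hasSum.tendsto_sum_nat).comp (tendsto_add_atTop_nat 1)
  have hcont : Continuous fun M : Matrix (Fin n) (Fin n) ℝ =>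
      (1 - β * D) • M.mulVec (deg A) := by
    refine (continuous_const_smul (1 - β * D)).comp
      (f := fun M : Matrix (Fin n) (Fin n) ℝ => M.mulVec (deg A)) ?_
    refine continuous_pi fun i => ?_
    simp only [Matrix.mulVec, dotProduct]
    refine continuous_finset_sum _ fun j _ => ?_
    exact (continuous_id.matrix_elem i j).mul continuous_const
  have hXfun : X = (fun M : Matrix (Fin n) (Fin n) ℝ => (1 - β * D) • M.mulVec (deg A))
      ∘ (fun k => ∑ i ∈ Finset.range (k + 1), (β • C) ^ i) := funext hclosed
  rw [hxeq, hXfun]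
  exact (hcont.tendsto T).comp hSt
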